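/- Let Γ be a group acting on a set X, and let G₀, G₁, ..., G_P be subgroups of Γ with G_i ∩ G_{i'} = G₀ for all distinct i, i' ∈ {1,...,P}. Suppose Θ₁, ..., Θ_P ⊆ X is a proper interactive P-tuple for G₁,...,G_P. Then the natural homomorphism from the amalgamated free product G₁ *_{G₀} G₂ *_{G₀} ⋯ *_{G₀} G_P to Γ (extending the inclusions G_i ↪ Γ) is injective. -/

import Mathlib

open Monoid Monoid.PushoutI Monoid.PushoutI.NormalWord


/-- **Ping-pong for amalgamated free products (Proposition 3 of Leininger–Reid).**
Let `Γ` be a group acting on a set `X`, and `G₀, G i (i : ι)` subgroups of `Γ` with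
`G i ⊓ G i' = G₀` for all distinct `i, i'`.  Suppose the sets `Θ i ⊆ X` form a proper
interactive tuple for the `G i`:
(1) each `Θ i` is nonempty; (2) the `Θ i` are pairwise disjoint; (3) `G₀` leaves each `Θ i`
invariant; (4) every `φ ∈ G i \ G₀` maps `Θ i'` into `Θ i` for `i' ≠ i`; (5) each `Θ i`
contains a point `θᵢ` not in `φ (Θ i')` for any `φ ∈ G i \ G₀`, `i' ≠ i`.
Then the natural homomorphism from the amalgamated free product of the `G i` over `G₀`
to `Γ` (extending the inclusions) is injective. -/
theorem pingpong_amalgam_injective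
    {Γ X ι : Type} [Group Γ] [MulAction Γ X]
    (G₀ : Subgroup Γ) (G : ι → Subgroup Γ)
    (hle : ∀ i, G₀ ≤ G i)
    (hinter : ∀ i i', i ≠ i' → G i ⊓ G i' = G₀)
    (Θ : ι → Set X)
    (h1 : ∀ i, (Θ i).Nonempty)
    (h2 : ∀ i i', i ≠ i' → Θ i ∩ Θ i' = ∅)
    (h3 : ∀ i, ∀ g ∈ G₀, ∀ x ∈ Θ i, g • x ∈ Θ i)
    (h4 : ∀ i i', i ≠ i' → ∀ g, g ∈ G i → g ∉ G₀ → ∀ x ∈ Θ i', g • x ∈ Θ i)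
    (h5 : ∀ i, ∃ θi ∈ Θ i, ∀ g, g ∈ G i → g ∉ G₀ →
      ∀ i', i' ≠ i → ∀ x ∈ Θ i', g • x ≠ θi) :
    Function.Injective
      (Monoid.PushoutI.lift (φ := fun i => Subgroup.inclusion (hle i))
        (fun i => (G i).subtype) G₀.subtype
        (fun i => MonoidHom.ext fun x => rfl)) := by
  classical
  set φ : ∀ i, ↥G₀ →* ↥(G i) := fun i => Subgroup.inclusion (hle i) with hφ
  set L := Monoid.PushoutI.lift (φ := φ) (fun i => (G i).subtype) G₀.subtype
      (fun i => MonoidHom.ext fun x => rfl) with hL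
  choose θs hθsmem hθs using h5
  -- the key ping-pong lemma on lists of letters
  have key : ∀ (t : List ((i : ι) × ↥(G i))) (p : (i : ι) × ↥(G i)),
      List.Chain' (fun a b => a.1 ≠ b.1) (p :: t) →
      (∀ q ∈ p :: t, (q.2 : Γ) ∉ G₀) →
      ∀ h' ∈ G₀, ∀ i', i' ≠ ((p :: t).getLast (List.cons_ne_nil p t)).1 →
      ∀ x ∈ Θ i',
        (h' * ((p :: t).map fun q => (q.2 : Γ)).prod) • x ∈ Θ p.1 ∧
        (h' * ((p :: t).map fun q => (q.2 : Γ)).prod) • x ≠ θs p.1 := by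
    intro t
    induction t with
    | nil =>
      intro p _ hmem h' hh' i' hi' x hx
      simp only [List.getLast_singleton] at hi'
      have hg : (h' * (p.2 : Γ)) ∈ G p.1 := mul_mem (hle p.1 hh') p.2.2
      have hg' : (h' * (p.2 : Γ)) ∉ G₀ := by
        intro hmem'
        exact hmem p (List.mem_singleton_self p) (by
          have : (p.2 : Γ) = h'⁻¹ * (h' * p.2) := by group
          rw [this]; exact mul_mem (inv_mem hh') hmem')
      simp only [List.map_cons, List.map_nil, List.prod_cons, List.prod_nil, mul_one]
      exact ⟨h4 p.1 i' (Ne.symm hi') _ hg hg' x hx,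
        hθs p.1 _ hg hg' i' hi' x hx⟩
    | cons q t' ih =>
      intro p hchain hmem h' hh' i' hi' x hx
      have hlast : ((p :: q :: t').getLast (List.cons_ne_nil _ _)).1
          = ((q :: t').getLast (List.cons_ne_nil _ _)).1 := by
        rw [List.getLast_cons]
      have htail := ih q (hchain.tail) (fun r hr => hmem r (List.mem_cons_of_mem p hr))
        1 (one_mem _) i' (by rw [hlast] at hi'; exact hi') x hx
      have hz : (((q :: t').map fun r => (r.2 : Γ)).prod) • x ∈ Θ q.1 := by
        simpa using htail.1
      have hpq : p.1 ≠ q.1 := (List.isChain_cons_cons.mp hchain).1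
      have hg : (h' * (p.2 : Γ)) ∈ G p.1 := mul_mem (hle p.1 hh') p.2.2
      have hg' : (h' * (p.2 : Γ)) ∉ G₀ := by
        intro hmem'
        exact hmem p List.mem_cons_self (by
          have : (p.2 : Γ) = h'⁻¹ * (h' * p.2) := by group
          rw [this]; exact mul_mem (inv_mem hh') hmem')
      have hrw : (h' * ((p :: q :: t').map fun r => (r.2 : Γ)).prod) • x
          = (h' * (p.2 : Γ)) • ((((q :: t').map fun r => (r.2 : Γ)).prod) • x) := by
        simp [mul_assoc, mul_smul]
      rw [hrw]
      exact ⟨h4 p.1 q.1 hpq _ hg hg' _ hz,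
        hθs p.1 _ hg hg' q.1 hpq.symm _ hz⟩
  rw [injective_iff_map_eq_one]
  intro x hx
  have hφinj : ∀ i, Function.Injective (φ i) := fun i => Subgroup.inclusion_injective _
  obtain ⟨d⟩ := transversal_nonempty φ hφinj
  set w : NormalWord d := x • NormalWord.empty with hwdef
  have hwx : w.prod = x := by
    rw [hwdef, NormalWord.prod_smul, NormalWord.prod_empty, mul_one]
  -- letters of w are not in G₀
  have hred : ∀ p ∈ w.toList, (p.2 : Γ) ∉ G₀ := by
    intro p hp hpG
    have hset : p.2 ∈ d.set p.1 := w.normalized p.1 p.2 hp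
    have hne1 : p.2 ≠ 1 := w.toWord.ne_one p hp
    have hrange : p.2 ∈ (φ p.1).range := ⟨⟨(p.2 : Γ), hpG⟩, rfl⟩
    have hu := (d.compl p.1).existsUnique p.2
    obtain ⟨y, hy, hyu⟩ := hu
    have e1 : (⟨⟨p.2, hrange⟩, ⟨1, d.one_mem p.1⟩⟩ :
        ((φ p.1).range : Set ↥(G p.1)) × (d.set p.1)) = y := hyu _ (by simp)
    have e2 : (⟨⟨1, one_mem _⟩, ⟨p.2, hset⟩⟩ :
        ((φ p.1).range : Set ↥(G p.1)) × (d.set p.1)) = y := hyu _ (by simp)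
    rw [← e2] at e1
    have : (p.2 : ↥(G p.1)) = 1 := by
      have := congrArg (fun z => (z.1 : ↥(G p.1))) e1
      simpa using this
    exact hne1 this
  -- compute L x
  have hLofCoprodI : ∀ v : Monoid.CoprodI.Word (fun i => ↥(G i)),
      L (ofCoprodI v.prod) = (v.toList.map fun p => ((p.2 : ↥(G p.1)) : Γ)).prod := by
    intro v
    rw [Monoid.CoprodI.Word.prod, map_list_prod, map_list_prod, List.map_map, List.map_map]
    congr 1
  have hxprod : L x = (w.head : Γ) * (w.toList.map fun p => ((p.2 : ↥(G p.1)) : Γ)).prod := by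
    rw [← hwx, NormalWord.prod, map_mul, hLofCoprodI, hL, lift_base]
    rfl
  rw [hx] at hxprod
  -- case on the word
  rcases hl : w.toList with _ | ⟨p, t⟩
  · -- empty word
    rw [hl] at hxprod
    simp at hxprod
    have hhead : w.head = 1 := Subtype.ext hxprod.symm
    rw [← hwx, NormalWord.prod, hhead, map_one, one_mul]
    have : w.toWord.prod = 1 := by
      rw [Monoid.CoprodI.Word.prod, hl]; simp
    rw [this, map_one]
  · exfalso
    rw [hl] at hxprod hred
    have hchain : List.Chain' (fun a b => a.1 ≠ b.1) (p :: t) := by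
      have := w.toWord.chain_ne; rwa [hl] at this
    set iN := ((p :: t).getLast (List.cons_ne_nil p t)).1 with hiN
    by_cases hcase : p.1 = iN
    · -- first and last index agree; use second letter's index
      rcases t with _ | ⟨q, t'⟩
      · -- single letter: direct contradiction
        simp only [List.map_cons, List.map_nil, List.prod_cons, List.prod_nil, mul_one] at hxprod
        exact hred p (List.mem_singleton_self p)
          (by
            have : (p.2 : Γ) = (w.head : Γ)⁻¹ := eq_inv_of_mul_eq_one_right hxprod.symm
            rw [this]; exact inv_mem w.head.2)
      · have hpq : p.1 ≠ q.1 := (List.isChain_cons_cons.mp hchain).1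
        obtain ⟨θ, hθ⟩ := h1 q.1
        have := (key (q :: t') p hchain hred (w.head : Γ) w.head.2 q.1
          (by rw [← hiN, ← hcase]; exact hpq.symm) θ hθ).1
        rw [← hxprod] at this
        simp only [one_smul] at this
        have hdisj := h2 p.1 q.1 hpq
        exact Set.eq_empty_iff_forall_notMem.mp hdisj θ ⟨this, hθ⟩
    · -- first and last index differ: use the special point of Θ p.1
      have := (key t p hchain hred (w.head : Γ) w.head.2 p.1
        (fun h => hcase h) (θs p.1) (hθsmem p.1)).2
      rw [← hxprod] at this
      simp only [one_smul] at this
      exact this rfl
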